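/- Let p_0, …, p_n (n ≥ 1) be the vertices of a left-turning polygonal arc in ℝ² with turning angles θ_1, …, θ_{n−1} ∈ (0, π) whose total curvature θ_1 + ⋯ + θ_{n−1} is at most π. Then for every edge index 0 ≤ j ≤ n−1 and every point x on the arc, det(p_{j+1} − p_j, x − p_j) ≥ 0; that is, the entire arc is contained in the closed left half-plane bounded by the line through each of its edges. -/

import Mathlib

open Real Finset

/-- The planar cross product (2×2 determinant) of two vectors in `ℝ²`. -/
def detv (u v : EuclideanSpace ℝ (Fin 2)) : ℝ := u 0 * v 1 - u 1 * v 0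

/-- `p 0, …, p n` is a polygonal arc (consecutive vertices distinct) which is left-turning with
turning angles `θ 1, …, θ (n-1) ∈ (0, π)`: at each interior vertex the oriented angle from the
incoming edge direction to the outgoing edge direction equals `θ j`; for `θ j ∈ (0, π)` this is
equivalent to the cross product of the two edge directions being positive together with the
unoriented angle between them being `θ j`. -/
def IsLeftTurningArc (p : ℕ → EuclideanSpace ℝ (Fin 2)) (θ : ℕ → ℝ) (n : ℕ) : Prop :=
  (∀ j, j < n → p (j + 1) ≠ p j) ∧
  ∀ j, 1 ≤ j → j ≤ n - 1 →
    0 < θ j ∧ θ j < Real.pi ∧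
    0 < detv (p j - p (j - 1)) (p (j + 1) - p j) ∧
    InnerProductGeometry.angle (p j - p (j - 1)) (p (j + 1) - p j) = θ j

/-- A left-turning polygonal arc of total curvature at most `π` lies in the closed left
half-plane bounded by the line through each of its edges: for every edge index `j` and every
point `x` on the arc, `det(p (j+1) - p j, x - p j) ≥ 0`. -/
noncomputable def cx (v : EuclideanSpace ℝ (Fin 2)) : ℂ := ⟨v 0, v 1⟩

lemma detv_eq (u v : EuclideanSpace ℝ (Fin 2)) :
    detv u v = ((starRingEnd ℂ) (cx u) * cx v).im := by
  simp [detv, cx, Complex.mul_im]; ring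

lemma inner_eq (u v : EuclideanSpace ℝ (Fin 2)) :
    (inner ℝ u v : ℝ) = ((starRingEnd ℂ) (cx u) * cx v).re := by
  simp [cx, Complex.mul_re, EuclideanSpace.inner_eq_star_dotProduct]
  ring

lemma cnorm_eq (v : EuclideanSpace ℝ (Fin 2)) : ‖v‖ = ‖cx v‖ := by
  rw [EuclideanSpace.norm_eq, Complex.norm_def, Complex.normSq_apply, Fin.sum_univ_two]
  simp [cx, sq_abs]
  ring_nf

lemma turn_key (u v : EuclideanSpace ℝ (Fin 2)) (θ : ℝ)
    (hdet : 0 < detv u v) (hang : InnerProductGeometry.angle u v = θ) :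
    (starRingEnd ℂ) (cx u) * cx v
      = ((‖(starRingEnd ℂ) (cx u) * cx v‖ : ℝ) : ℂ) * Complex.exp (θ * Complex.I) := by
  set w := (starRingEnd ℂ) (cx u) * cx v with hw
  have him : 0 < w.im := by rw [← detv_eq]; exact hdet
  have hw0 : w ≠ 0 := by intro h; rw [h] at him; simp at him
  have habs : ‖w‖ = ‖u‖ * ‖v‖ := by
    rw [hw, norm_mul, Complex.norm_conj, cnorm_eq, cnorm_eq]
  have harg : Complex.arg w = θ := by
    have h1 : 0 < Complex.arg w := by
      by_contra h
      push_neg at h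
      have := Complex.sin_arg w
      have hs : Real.sin (Complex.arg w) ≤ 0 := by
        apply Real.sin_nonpos_of_nonpos_of_neg_pi_le h (le_of_lt (Complex.neg_pi_lt_arg w))
      rw [this] at hs
      have : 0 < w.im / ‖w‖ := div_pos him (norm_pos_iff.mpr hw0)
      linarith
    have h2 : Complex.arg w ≤ Real.pi := Complex.arg_le_pi w
    rw [← hang, InnerProductGeometry.angle, inner_eq, ← hw, ← habs]
    rw [← Complex.cos_arg hw0]
    exact (Real.arccos_cos (le_of_lt h1) h2).symm
  conv_lhs => rw [← Complex.norm_mul_exp_arg_mul_I w]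
  rw [harg]

lemma cx_ne_zero {u : EuclideanSpace ℝ (Fin 2)} (h : u ≠ 0) : cx u ≠ 0 := by
  intro h0
  apply h
  ext i
  fin_cases i
  · exact congrArg Complex.re h0
  · exact congrArg Complex.im h0

lemma detv_add_right (u v w : EuclideanSpace ℝ (Fin 2)) :
    detv u (v + w) = detv u v + detv u w := by
  simp [detv, PiLp.add_apply]; ring

lemma detv_smul_right (c : ℝ) (u v : EuclideanSpace ℝ (Fin 2)) :
    detv u (c • v) = c * detv u v := by
  simp [detv, PiLp.smul_apply, smul_eq_mul]; ring

lemma detv_zero_right (u : EuclideanSpace ℝ (Fin 2)) : detv u 0 = 0 := by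
  simp [detv]

lemma detv_neg_right (u v : EuclideanSpace ℝ (Fin 2)) : detv u (-v) = -detv u v := by
  simp [detv, PiLp.neg_apply]; ring

lemma detv_antisymm (u v : EuclideanSpace ℝ (Fin 2)) : detv u v = -detv v u := by
  simp [detv]; ring

section main
variable (n : ℕ) (hn : 1 ≤ n) (p : ℕ → EuclideanSpace ℝ (Fin 2)) (θ : ℕ → ℝ)
    (harc : IsLeftTurningArc p θ n)
    (hcurv : (∑ j ∈ Finset.Icc 1 (n - 1), θ j) ≤ Real.pi)

include hn harc in
lemma spiral : ∀ a b, a ≤ b → b ≤ n - 1 →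
    ∃ r : ℝ, 0 < r ∧
      (starRingEnd ℂ) (cx (p (a+1) - p a)) * cx (p (b+1) - p b)
        = (r : ℂ) * Complex.exp (((∑ i ∈ Finset.Icc (a+1) b, θ i) : ℝ) * Complex.I) := by
  intro a b hab
  induction b, hab using Nat.le_induction with
  | base =>
    intro ha
    refine ⟨Complex.normSq (cx (p (a+1) - p a)), ?_, ?_⟩
    · have hne : p (a+1) - p a ≠ 0 := sub_ne_zero.mpr (harc.1 a (by omega))
      exact Complex.normSq_pos.mpr (cx_ne_zero hne)
    · simp [Complex.normSq_eq_conj_mul_self]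
  | succ b hab ih =>
    intro hb1
    obtain ⟨r, hr, heq⟩ := ih (by omega)
    have hturn := harc.2 (b+1) (by omega) hb1
    simp only [Nat.add_sub_cancel] at hturn
    have hkey := turn_key (p (b+1) - p b) (p (b+2) - p (b+1)) (θ (b+1)) hturn.2.2.1 hturn.2.2.2
    have hne : p (b+1) - p b ≠ 0 := sub_ne_zero.mpr (harc.1 b (by omega))
    have hcne : cx (p (b+1) - p b) ≠ 0 := cx_ne_zero hne
    set s := ‖(starRingEnd ℂ) (cx (p (b+1) - p b)) * cx (p (b+2) - p (b+1))‖ with hs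
    have hspos : 0 < s := by
      rw [hs]
      apply norm_pos_iff.mpr
      intro h0
      rw [h0] at hkey
      have hdet := hturn.2.2.1
      rw [detv_eq, h0] at hdet
      simp at hdet
    have hnsq : (0:ℝ) < Complex.normSq (cx (p (b+1) - p b)) := Complex.normSq_pos.mpr hcne
    refine ⟨r * s / Complex.normSq (cx (p (b+1) - p b)), by positivity, ?_⟩
    have hmul : ((starRingEnd ℂ) (cx (p (a+1) - p a)) * cx (p (b+1) - p b)) *
        ((starRingEnd ℂ) (cx (p (b+1) - p b)) * cx (p (b+2) - p (b+1)))
        = ((Complex.normSq (cx (p (b+1) - p b)) : ℝ) : ℂ) *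
          ((starRingEnd ℂ) (cx (p (a+1) - p a)) * cx (p (b+2) - p (b+1))) := by
      rw [Complex.normSq_eq_conj_mul_self]
      ring
    have hnsqC : ((Complex.normSq (cx (p (b+1) - p b)) : ℝ) : ℂ) ≠ 0 := by
      exact_mod_cast ne_of_gt hnsq
    apply mul_left_cancel₀ hnsqC
    rw [← hmul, heq, hkey, Finset.sum_Icc_succ_top (by omega : a+1 ≤ b+1)]
    push_cast
    rw [add_mul, Complex.exp_add]
    field_simp

include hn harc hcurv in
lemma edge_det_nonneg : ∀ a b, a ≤ b → b ≤ n - 1 →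
    0 ≤ detv (p (a+1) - p a) (p (b+1) - p b) := by
  intro a b hab hb
  obtain ⟨r, hr, heq⟩ := spiral n hn p θ harc a b hab hb
  rw [detv_eq, heq]
  have hφ0 : 0 ≤ ∑ i ∈ Finset.Icc (a+1) b, θ i := by
    apply Finset.sum_nonneg
    intro i hi
    simp only [Finset.mem_Icc] at hi
    exact le_of_lt (harc.2 i (by omega) (by omega)).1
  have hφπ : (∑ i ∈ Finset.Icc (a+1) b, θ i) ≤ Real.pi := by
    refine le_trans (Finset.sum_le_sum_of_subset_of_nonneg ?_ ?_) hcurv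
    · intro i hi
      simp only [Finset.mem_Icc] at hi ⊢
      omega
    · intro i hi _
      simp only [Finset.mem_Icc] at hi
      exact le_of_lt (harc.2 i (by omega) (by omega)).1
  have him : ((r:ℂ) * Complex.exp (((∑ i ∈ Finset.Icc (a+1) b, θ i : ℝ)) * Complex.I)).im
      = r * Real.sin (∑ i ∈ Finset.Icc (a+1) b, θ i) := by
    simp only [Complex.mul_im, Complex.ofReal_re, Complex.ofReal_im,
      Complex.exp_ofReal_mul_I_im, Complex.exp_ofReal_mul_I_re]
    ring
  rw [him]
  exact mul_nonneg (le_of_lt hr) (Real.sin_nonneg_of_nonneg_of_le_pi hφ0 hφπ)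

include hn harc hcurv in
lemma vertex_nonneg : ∀ j, j ≤ n - 1 → ∀ k, k ≤ n →
    0 ≤ detv (p (j+1) - p j) (p k - p j) := by
  intro j hj
  have hup : ∀ k, j ≤ k → k ≤ n → 0 ≤ detv (p (j+1) - p j) (p k - p j) := by
    intro k hjk
    induction k, hjk using Nat.le_induction with
    | base => intro _; simp [detv_zero_right]
    | succ k hjk ih =>
      intro hk1
      have hsplit : p (k+1) - p j = (p (k+1) - p k) + (p k - p j) := by abel
      rw [hsplit, detv_add_right]
      have h1 := edge_det_nonneg n hn p θ harc hcurv j k hjk (by omega)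
      have h2 := ih (by omega)
      linarith
  have hdown : ∀ d k, k + d = j → 0 ≤ detv (p (j+1) - p j) (p k - p j) := by
    intro d
    induction d with
    | zero => intro k hk; rw [Nat.add_zero] at hk; subst hk; simp [detv_zero_right]
    | succ d ih =>
      intro k hk
      have ih' := ih (k+1) (by omega)
      have hsplit : p k - p j = (p (k+1) - p j) + -(p (k+1) - p k) := by abel
      have hneg : detv (p (j+1) - p j) (-(p (k+1) - p k))
          = detv (p (k+1) - p k) (p (j+1) - p j) := by
        rw [detv_neg_right, detv_antisymm]; ring
      have h1 := edge_det_nonneg n hn p θ harc hcurv k j (by omega) hj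
      rw [hsplit, detv_add_right, hneg]
      linarith
  intro k hk
  rcases le_or_gt j k with h | h
  · exact hup k h hk
  · exact hdown (j - k) k (by omega)
end main

theorem arc_in_left_halfplane_of_each_edge
    (n : ℕ) (hn : 1 ≤ n) (p : ℕ → EuclideanSpace ℝ (Fin 2)) (θ : ℕ → ℝ)
    (harc : IsLeftTurningArc p θ n)
    (hcurv : (∑ j ∈ Finset.Icc 1 (n - 1), θ j) ≤ Real.pi) :
    ∀ j, j ≤ n - 1 → ∀ x : EuclideanSpace ℝ (Fin 2),
      (∃ k, k ≤ n - 1 ∧ x ∈ segment ℝ (p k) (p (k + 1))) →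
      0 ≤ detv (p (j + 1) - p j) (x - p j) := by
  intro j hj x ⟨k, hk, hseg⟩
  rw [segment_eq_image] at hseg
  obtain ⟨t, ht, hx⟩ := hseg
  have hx' : x = (1 - t) • p k + t • p (k+1) := by
    rw [← hx]
  have hsplit : x - p j = (1 - t) • (p k - p j) + t • (p (k+1) - p j) := by
    rw [hx']
    have h1 : (1 - t) • (p k - p j) + t • (p (k+1) - p j)
        = (1 - t) • p k + t • p (k+1) - ((1 - t) + t) • p j := by
      rw [add_smul, smul_sub, smul_sub]; abel
    rw [h1]
    norm_num
  rw [hsplit, detv_add_right, detv_smul_right, detv_smul_right]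
  have hD1 := vertex_nonneg n hn p θ harc hcurv j hj k (by omega)
  have hD2 := vertex_nonneg n hn p θ harc hcurv j hj (k+1) (by omega)
  have h1 : (0:ℝ) ≤ 1 - t := by linarith [ht.2]
  nlinarith [ht.1, ht.2]
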